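/- Let G be a connected chordal graph, and let S be an inclusion-minimal element of the set of minimal vertex separators of G. Let Γ_m be a connected component of G(V \ S) such that the induced subgraph G(Γ_m ∪ S) is not complete. Then every minimal vertex separator of G(Γ_m ∪ S) is a minimal vertex separator of G, and S itself is not a minimal vertex separator of G(Γ_m ∪ S); in particular the containment of separator sets is proper. -/

import Mathlib

namespace Chordal

variable {V : Type*} [Fintype V]

/-- A closed walk has a chord: an edge of `G` joining two support vertices that is
not an edge of the walk. -/
def HasChord (G : SimpleGraph V) {u : V} (c : G.Walk u u) : Prop :=
  ∃ v w, v ∈ c.support ∧ w ∈ c.support ∧ G.Adj v w ∧ s(v, w) ∉ c.edges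

/-- A graph is chordal if every cycle of length at least 4 has a chord. -/
def IsChordal (G : SimpleGraph V) : Prop :=
  ∀ ⦃u : V⦄ (c : G.Walk u u), c.IsCycle → 4 ≤ c.length → HasChord G c

/-- A maximal clique of `G`. -/
def IsMaxClique (G : SimpleGraph V) (s : Set V) : Prop :=
  G.IsClique s ∧ ∀ t : Set V, G.IsClique t → s ⊆ t → s = t

/-- A maximal clique of the induced subgraph `G(W)`. -/
def IsMaxCliqueOn (G : SimpleGraph V) (W s : Set V) : Prop :=
  s ⊆ W ∧ G.IsClique s ∧ ∀ t : Set V, t ⊆ W → G.IsClique t → s ⊆ t → s = t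

/-- There is a walk from `u` to `w` staying inside `W` and avoiding `S`. -/
def ReachWithin (G : SimpleGraph V) (W S : Set V) (u w : V) : Prop :=
  ∃ p : G.Walk u w, ∀ x ∈ p.support, x ∈ W ∧ x ∉ S

/-- `S` separates `u` from `w` in the induced subgraph `G(W)`. -/
def SeparatesOn (G : SimpleGraph V) (W S : Set V) (u w : V) : Prop :=
  u ∈ W ∧ w ∈ W ∧ u ∉ S ∧ w ∉ S ∧ u ≠ w ∧ ¬ ReachWithin G W S u w

/-- `S` is a minimal vertex separator of the induced subgraph `G(W)`:
for some pair `u, w` it is an inclusion-minimal set separating `u` from `w`. -/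
def IsMinSeparatorOn (G : SimpleGraph V) (W S : Set V) : Prop :=
  S ⊆ W ∧ ∃ u w, SeparatesOn G W S u w ∧ ∀ S' ⊂ S, ¬ SeparatesOn G W S' u w

/-- `S` is a minimal vertex separator of `G`. -/
def IsMinSeparator (G : SimpleGraph V) (S : Set V) : Prop :=
  IsMinSeparatorOn G Set.univ S

/-- `S` is inclusion-minimal among the minimal vertex separators of `G`. -/
def IsInclMinSeparator (G : SimpleGraph V) (S : Set V) : Prop :=
  IsMinSeparator G S ∧ ∀ S' : Set V, IsMinSeparator G S' → S' ⊆ S → S' = S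

/-- `Γ` is a connected component of `G(V \ S)`. -/
def IsCompOutside (G : SimpleGraph V) (S Γ : Set V) : Prop :=
  ∃ u, u ∉ S ∧ Γ = {w | ReachWithin G Set.univ S u w}

/-- A vertex is simplicial if its neighborhood is a clique. -/
def IsSimplicial (G : SimpleGraph V) (v : V) : Prop :=
  G.IsClique (G.neighborSet v)

/-- The simplicial component of a clique `C`: the simplicial vertices of `G` in `C`. -/
def Simp (G : SimpleGraph V) (C : Set V) : Set V :=
  {v ∈ C | IsSimplicial G v}

/-- The non-simplicial component of a clique `C`. -/
def Sep (G : SimpleGraph V) (C : Set V) : Set V :=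
  C \ Simp G C

/-- `C` is a boundary clique (simply separated clique): a maximal clique such that
`Sep C = C ∩ C'` for some other maximal clique `C'`. -/
def IsBoundaryClique (G : SimpleGraph V) (C : Set V) : Prop :=
  IsMaxClique G C ∧ ∃ C' : Set V, IsMaxClique G C' ∧ C' ≠ C ∧ Sep G C = C ∩ C'

/-- The induced subgraph on `W`, kept on the same vertex type. -/
def restrictS (G : SimpleGraph V) (W : Set V) : SimpleGraph V where
  Adj u v := G.Adj u v ∧ u ∈ W ∧ v ∈ W
  symm := ⟨fun u v ⟨h, hu, hv⟩ => ⟨h.symm, hv, hu⟩⟩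
  loopless := ⟨fun u ⟨h, _, _⟩ => G.loopless.irrefl u h⟩

/-- The vertex subset `A` induces a connected subgraph of `T`. -/
def ConnOn {α : Type*} (T : SimpleGraph α) (A : Set α) : Prop :=
  A.Nonempty ∧ ∀ u ∈ A, ∀ v ∈ A, ∃ p : T.Walk u v, ∀ x ∈ p.support, x ∈ A

/-- The induced subgraph `G(W)` is complete. -/
def CompleteOn (G : SimpleGraph V) (W : Set V) : Prop :=
  ∀ u ∈ W, ∀ v ∈ W, u ≠ v → G.Adj u v

/-- A clique tree of `G`: a tree on the maximal cliques of `G` satisfying the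
junction property. -/
def IsCliqueTree (G : SimpleGraph V) (T : SimpleGraph {s : Set V // IsMaxClique G s}) : Prop :=
  T.IsTree ∧ ∀ (C₁ C₂ : {s : Set V // IsMaxClique G s}) (p : T.Walk C₁ C₂), p.IsPath →
    ∀ C₃ ∈ p.support, C₁.val ∩ C₂.val ⊆ C₃.val

/-- A leaf (endpoint) of a graph: a vertex with exactly one neighbor. -/
def IsLeaf {α : Type*} (T : SimpleGraph α) (a : α) : Prop :=
  ∃! b, T.Adj a b

/-- The union of the cliques preceding position `k` in a sequence. -/
def prefUnion {K : ℕ} (f : Fin K → Set V) (k : Fin K) : Set V :=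
  {v | ∃ j, j < k ∧ v ∈ f j}

/-- A perfect sequence of the maximal cliques of the induced subgraph `G(W)`:
an enumeration of the maximal cliques of `G(W)` with the running intersection property. -/
def IsPerfectSeqOn (G : SimpleGraph V) (W : Set V) {K : ℕ} (f : Fin K → Set V) : Prop :=
  Function.Injective f ∧ (∀ s : Set V, IsMaxCliqueOn G W s ↔ ∃ k, f k = s) ∧
  ∀ k : Fin K, 0 < (k : ℕ) →
    G.IsClique (prefUnion f k ∩ f k) ∧ ∃ k' : Fin K, k' < k ∧ prefUnion f k ∩ f k ⊆ f k'

/-- A perfect sequence of the maximal cliques of `G`. -/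
def IsPerfectSeq (G : SimpleGraph V) {K : ℕ} (f : Fin K → Set V) : Prop :=
  Function.Injective f ∧ (∀ s : Set V, IsMaxClique G s ↔ ∃ k, f k = s) ∧
  ∀ k : Fin K, 0 < (k : ℕ) →
    G.IsClique (prefUnion f k ∩ f k) ∧ ∃ k' : Fin K, k' < k ∧ prefUnion f k ∩ f k ⊆ f k'

/-- The closed neighborhood of a vertex. -/
def closedNbhd (G : SimpleGraph V) (v : V) : Set V :=
  insert v (G.neighborSet v)


set_option linter.unusedSectionVars false

section Aux

open SimpleGraph


open SimpleGraph

variable [DecidableEq V] {G : SimpleGraph V} {S S' Γ : Set V}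

lemma reach_of_mem_support {u y x : V} (p : G.Walk u y) (hp : ∀ z ∈ p.support, z ∉ S)
    (hx : x ∈ p.support) : ReachWithin G Set.univ S u x :=
  ⟨p.takeUntil x hx, fun z hz => ⟨trivial, hp z (p.support_takeUntil_subset hx hz)⟩⟩

lemma reach_symm {u w : V} (h : ReachWithin G Set.univ S u w) : ReachWithin G Set.univ S w u := by
  obtain ⟨p, hp⟩ := h
  exact ⟨p.reverse, fun x hx => hp x (by simpa [Walk.support_reverse] using hx)⟩

lemma reach_trans {u v w : V} (h1 : ReachWithin G Set.univ S u v)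
    (h2 : ReachWithin G Set.univ S v w) : ReachWithin G Set.univ S u w := by
  obtain ⟨p, hp⟩ := h1; obtain ⟨q, hq⟩ := h2
  refine ⟨p.append q, fun x hx => ?_⟩
  rcases (Walk.mem_support_append_iff p q).mp hx with h | h
  exacts [hp x h, hq x h]

lemma reach_not_mem {u z : V} (h : ReachWithin G Set.univ S u z) : z ∉ S := by
  obtain ⟨p, hp⟩ := h
  exact (hp z p.end_mem_support).2

lemma reach_adj {u x y : V} (h : ReachWithin G Set.univ S u x) (ha : G.Adj x y) (hy : y ∉ S) :
    ReachWithin G Set.univ S u y := by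
  obtain ⟨p, hp⟩ := h
  refine ⟨p.concat ha, fun z hz => ?_⟩
  rw [Walk.support_concat, List.mem_append] at hz
  rcases hz with h | h
  · exact hp z h
  · simp only [List.mem_singleton] at h
    exact ⟨trivial, h ▸ hy⟩

/-- connectivity within a component -/
lemma comp_walk {u₀ : V} (hΓ : Γ = {w | ReachWithin G Set.univ S u₀ w}) {x y : V}
    (hx : x ∈ Γ) (hy : y ∈ Γ) :
    ∃ p : G.Walk x y, ∀ z ∈ p.support, z ∈ Γ := by
  rw [hΓ] at hx hy
  obtain ⟨p, hp⟩ := hx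
  obtain ⟨q, hq⟩ := hy
  refine ⟨p.reverse.append q, fun z hz => ?_⟩
  rw [hΓ]
  rcases (Walk.mem_support_append_iff _ _).mp hz with h | h
  · rw [Walk.support_reverse, List.mem_reverse] at h
    exact reach_of_mem_support p (fun a ha => (hp a ha).2) h
  · exact reach_of_mem_support q (fun a ha => (hq a ha).2) h

lemma comp_disj {u₀ : V} (hΓ : Γ = {w | ReachWithin G Set.univ S u₀ w}) {x : V}
    (hx : x ∈ Γ) : x ∉ S := reach_not_mem (hΓ ▸ hx)

lemma comp_adj_closed {u₀ : V} (hΓ : Γ = {w | ReachWithin G Set.univ S u₀ w}) {x y : V}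
    (hx : x ∈ Γ) (ha : G.Adj x y) (hy : y ∉ S) : y ∈ Γ := by
  rw [hΓ] at hx ⊢
  exact reach_adj hx ha hy

/-- leaving the component crosses S -/
lemma boundary {u₀ : V} (hΓ : Γ = {w | ReachWithin G Set.univ S u₀ w}) {a c : V}
    (ha : a ∈ Γ ∪ S) (hc : c ∉ Γ ∪ S) (hadj : G.Adj a c) : a ∈ S := by
  rcases ha with ha | ha
  · exact absurd (Or.inl (comp_adj_closed hΓ ha hadj (fun h => hc (Or.inr h)))) hc
  · exact ha

/-- Rerouting a walk avoiding S' into the region Γ ∪ S, given that S is a clique. -/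
lemma reroute (hclq : G.IsClique S) {u₀ : V}
    (hΓ : Γ = {w | ReachWithin G Set.univ S u₀ w}) :
    ∀ {a b : V} (p : G.Walk a b), b ∈ Γ ∪ S → (∀ x ∈ p.support, x ∉ S') →
    ∃ d, ((a ∈ Γ ∪ S → d = a) ∧ (a ∉ Γ ∪ S → d ∈ S)) ∧
      ∃ q : G.Walk d b, ∀ x ∈ q.support, x ∈ Γ ∪ S ∧ x ∉ S' := by
  intro a b p
  induction p with
  | @nil b =>
    intro hb hS'
    exact ⟨b, ⟨fun _ => rfl, fun h => absurd hb h⟩,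
      Walk.nil, fun x hx => by
        rw [Walk.support_nil, List.mem_singleton] at hx
        subst hx; exact ⟨hb, hS' x (by simp)⟩⟩
  | @cons a c b h p ih =>
    intro hb hS'
    have haS' : a ∉ S' := hS' a (by simp)
    obtain ⟨d, ⟨hd1, hd2⟩, q, hq⟩ := ih hb (fun x hx => hS' x (by simp [hx]))
    by_cases hcin : c ∈ Γ ∪ S
    · have hdc : d = c := hd1 hcin
      subst hdc
      by_cases hain : a ∈ Γ ∪ S
      · exact ⟨a, ⟨fun _ => rfl, fun hn => absurd hain hn⟩, Walk.cons h q,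
          fun x hx => by
            rw [Walk.support_cons, List.mem_cons] at hx
            rcases hx with rfl | hx
            exacts [⟨hain, haS'⟩, hq x hx]⟩
      · have hcS : d ∈ S := boundary hΓ hcin hain h.symm
        exact ⟨d, ⟨fun hn => absurd hn hain, fun _ => hcS⟩, q, hq⟩
    · by_cases hain : a ∈ Γ ∪ S
      · have haS : a ∈ S := boundary hΓ hain hcin h
        have hdS : d ∈ S := hd2 hcin
        by_cases had : a = d
        · subst had
          exact ⟨a, ⟨fun _ => rfl, fun hn => absurd hain hn⟩, q, hq⟩
        · exact ⟨a, ⟨fun _ => rfl, fun hn => absurd hain hn⟩,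
            Walk.cons (hclq haS hdS had) q, fun x hx => by
              rw [Walk.support_cons, List.mem_cons] at hx
              rcases hx with rfl | hx
              exacts [⟨hain, haS'⟩, hq x hx]⟩
      · exact ⟨d, ⟨fun hn => absurd hn hain, fun _ => hd2 hcin⟩, q, hq⟩

lemma edge_mem_of_length_one : ∀ {x y : V} (r : G.Walk x y), r.length = 1 → s(x, y) ∈ r.edges := by
  intro x y r
  cases r with
  | nil => simp
  | @cons _ c _ h r' =>
    intro hl
    rw [Walk.length_cons] at hl
    have hc : c = y := Walk.eq_of_length_eq_zero (p := r') (by omega)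
    subst hc
    simp [Walk.edges_cons]

lemma adj_of_length_one {x y : V} (r : G.Walk x y) (h : r.length = 1) : G.Adj x y :=
  r.edges_subset_edgeSet (edge_mem_of_length_one r h)

lemma length_take_add_drop {a b x : V} (p : G.Walk a b) (hx : x ∈ p.support) :
    (p.takeUntil x hx).length + (p.dropUntil x hx).length = p.length := by
  have := congrArg Walk.length (p.take_spec hx)
  rwa [Walk.length_append] at this

/-- A chord on a walk yields a strictly shorter walk with support inside the old one. -/
lemma shortcut {a b x y : V} (p : G.Walk a b)
    (hx : x ∈ p.support) (hy : y ∈ p.support) (hadj : G.Adj x y)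
    (he : s(x, y) ∉ p.edges) :
    ∃ q : G.Walk a b, q.length < p.length ∧ ∀ z ∈ q.support, z ∈ p.support := by
  have hsplit := p.take_spec hy
  have hlen : (p.takeUntil y hy).length + (p.dropUntil y hy).length = p.length :=
    length_take_add_drop p hy
  by_cases hxt : x ∈ (p.takeUntil y hy).support
  · set t := p.takeUntil y hy with ht
    have hlen2 : (t.takeUntil x hxt).length + (t.dropUntil x hxt).length = t.length :=
      length_take_add_drop t hxt
    have h0 : (t.dropUntil x hxt).length ≠ 0 := fun h0 => hadj.ne (Walk.eq_of_length_eq_zero h0)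
    have h1 : (t.dropUntil x hxt).length ≠ 1 := by
      intro h1
      exact he (p.edges_takeUntil_subset hy
        (t.edges_dropUntil_subset hxt (edge_mem_of_length_one _ h1)))
    refine ⟨(t.takeUntil x hxt).append (Walk.cons hadj (p.dropUntil y hy)), ?_, ?_⟩
    · rw [Walk.length_append, Walk.length_cons]; omega
    · intro z hz
      rcases (Walk.mem_support_append_iff _ _).mp hz with hz | hz
      · exact p.support_takeUntil_subset hy (t.support_takeUntil_subset hxt hz)
      · rw [Walk.support_cons, List.mem_cons] at hz
        rcases hz with rfl | hz
        · exact hx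
        · exact p.support_dropUntil_subset hy hz
  · have hxd : x ∈ (p.dropUntil y hy).support := by
      have := hx
      rw [← hsplit, Walk.mem_support_append_iff] at this
      exact this.resolve_left hxt
    set d := p.dropUntil y hy with hd
    have hlen2 : (d.takeUntil x hxd).length + (d.dropUntil x hxd).length = d.length :=
      length_take_add_drop d hxd
    have h0 : (d.takeUntil x hxd).length ≠ 0 := fun h0 =>
      hadj.ne' (Walk.eq_of_length_eq_zero h0)
    have h1 : (d.takeUntil x hxd).length ≠ 1 := by
      intro h1
      have := edge_mem_of_length_one _ h1
      rw [Sym2.eq_swap] at this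
      exact he (p.edges_dropUntil_subset hy (d.edges_takeUntil_subset hxd this))
    refine ⟨(p.takeUntil y hy).append (Walk.cons hadj.symm (d.dropUntil x hxd)), ?_, ?_⟩
    · rw [Walk.length_append, Walk.length_cons]; omega
    · intro z hz
      rcases (Walk.mem_support_append_iff _ _).mp hz with hz | hz
      · exact p.support_takeUntil_subset hy hz
      · rw [Walk.support_cons, List.mem_cons] at hz
        rcases hz with rfl | hz
        · exact hy
        · exact p.support_dropUntil_subset hy (d.support_dropUntil_subset hxd hz)

lemma exists_adj_reach : ∀ {u s : V} (q : G.Walk u s), s ∈ S → u ∉ S →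
    (∀ x ∈ q.support, x ∈ S → x = s) →
    ∃ v, G.Adj s v ∧ ReachWithin G Set.univ S u v := by
  intro u s q
  induction q with
  | nil => intro hs hu _; exact absurd hs hu
  | @cons a c s h q ih =>
    intro hs hu hsup
    by_cases hc : c = s
    · subst hc
      exact ⟨a, h.symm, Walk.nil, fun x hx => by
        rw [Walk.support_nil, List.mem_singleton] at hx
        exact ⟨trivial, hx ▸ hu⟩⟩
    · have hcS : c ∉ S := fun hcs => hc (hsup c (by simp) hcs)
      obtain ⟨v, hv, r, hr⟩ := ih hs hcS (fun x hx hxS => hsup x (by simp [hx]) hxS)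
      refine ⟨v, hv, Walk.cons h r, fun x hx => ?_⟩
      rw [Walk.support_cons, List.mem_cons] at hx
      rcases hx with rfl | hx
      exacts [⟨trivial, hu⟩, hr x hx]

lemma sep_neighbors {u w : V}
    (hnr : ¬ ReachWithin G Set.univ S u w) (huS : u ∉ S) (hwS : w ∉ S) (hne : u ≠ w)
    (hmin : ∀ S'' ⊂ S, ¬ SeparatesOn G Set.univ S'' u w) {s : V} (hs : s ∈ S) :
    (∃ v, G.Adj s v ∧ ReachWithin G Set.univ S u v) ∧
    (∃ v, G.Adj s v ∧ ReachWithin G Set.univ S w v) := by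
  have hss : S \ {s} ⊂ S := Set.sdiff_singleton_ssubset.mpr hs
  have h1 := hmin _ hss
  simp only [SeparatesOn, not_and, not_not] at h1
  have hreach : ReachWithin G Set.univ (S \ {s}) u w :=
    h1 trivial trivial (fun h => huS h.1) (fun h => hwS h.1) hne
  obtain ⟨q, hq⟩ := hreach
  have hsq : s ∈ q.support := by
    by_contra hsq
    refine hnr ⟨q, fun x hx => ⟨trivial, fun hxS => ?_⟩⟩
    exact (hq x hx).2 ⟨hxS, fun hxs => hsq ((Set.mem_singleton_iff.mp hxs) ▸ hx)⟩
  have hkey : ∀ x ∈ q.support, x ∈ S → x = s := fun x hx hxS => by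
    by_contra hxs
    exact (hq x hx).2 ⟨hxS, hxs⟩
  constructor
  · refine exists_adj_reach (q.takeUntil s hsq) hs huS ?_
    exact fun x hx hxS => hkey x (q.support_takeUntil_subset hsq hx) hxS
  · refine exists_adj_reach (q.dropUntil s hsq).reverse hs hwS ?_
    intro x hx hxS
    rw [Walk.support_reverse, List.mem_reverse] at hx
    exact hkey x (q.support_dropUntil_subset hsq hx) hxS

lemma exists_min_path (a b : V) (R : V → Prop)
    (hex : ∃ p : G.Walk a b, ∀ z ∈ p.support, z = a ∨ z = b ∨ R z) :
    ∃ p : G.Walk a b, p.IsPath ∧ (∀ z ∈ p.support, z = a ∨ z = b ∨ R z) ∧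
      ∀ q : G.Walk a b, (∀ z ∈ q.support, z = a ∨ z = b ∨ R z) → p.length ≤ q.length := by
  classical
  have hex' : ∃ n, ∃ p : G.Walk a b, p.length = n ∧ ∀ z ∈ p.support, z = a ∨ z = b ∨ R z := by
    obtain ⟨p, hp⟩ := hex; exact ⟨p.length, p, rfl, hp⟩
  obtain ⟨p, hpl, hQ⟩ := Nat.find_spec hex'
  refine ⟨p.bypass, p.bypass_isPath, fun z hz => hQ z (p.support_bypass_subset hz), ?_⟩
  intro q hq
  calc p.bypass.length ≤ p.length := p.length_bypass_le
    _ = Nat.find hex' := hpl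
    _ ≤ q.length := Nat.find_min' hex' ⟨q, rfl, hq⟩

lemma isClique_of_minSeparator (hch : IsChordal G) (hS : IsMinSeparator G S) :
    G.IsClique S := by
  obtain ⟨-, u, w, ⟨-, -, huS, hwS, hne, hnr⟩, hmin⟩ := hS
  rw [SimpleGraph.isClique_iff]
  intro a ha b hb hab
  by_contra hadj
  obtain ⟨⟨va, hva, hrva⟩, -⟩ := sep_neighbors hnr huS hwS hne hmin ha
  obtain ⟨⟨vb, hvb, hrvb⟩, -⟩ := sep_neighbors hnr huS hwS hne hmin hb
  obtain ⟨-, ⟨wa, hwa, hrwa⟩⟩ := sep_neighbors hnr huS hwS hne hmin ha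
  obtain ⟨-, ⟨wb, hwb, hrwb⟩⟩ := sep_neighbors hnr huS hwS hne hmin hb
  have build : ∀ (r v1 v2 : V), G.Adj a v1 → ReachWithin G Set.univ S r v1 →
      G.Adj b v2 → ReachWithin G Set.univ S r v2 →
      ∃ p : G.Walk a b, ∀ z ∈ p.support, z = a ∨ z = b ∨ ReachWithin G Set.univ S r z := by
    intro r v1 v2 h1 hr1 h2 hr2
    obtain ⟨p1, hp1⟩ := hr1
    obtain ⟨p2, hp2⟩ := hr2
    refine ⟨Walk.cons h1 ((p1.reverse.append p2).concat h2.symm), ?_⟩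
    intro z hz
    rw [Walk.support_cons, List.mem_cons] at hz
    rcases hz with rfl | hz
    · exact Or.inl rfl
    rw [Walk.support_concat, List.mem_append] at hz
    rcases hz with hz | hz
    · right; right
      rcases (Walk.mem_support_append_iff _ _).mp hz with h | h
      · rw [Walk.support_reverse, List.mem_reverse] at h
        exact reach_of_mem_support p1 (fun t ht => (hp1 t ht).2) h
      · exact reach_of_mem_support p2 (fun t ht => (hp2 t ht).2) h
    · simp only [List.mem_singleton] at hz
      exact Or.inr (Or.inl hz)
  obtain ⟨Pu, hPu_path, hPuQ, hPu_min⟩ := exists_min_path a b _ (build u va vb hva hrva hvb hrvb)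
  obtain ⟨Pw, hPw_path, hPwQ, hPw_min⟩ := exists_min_path a b _ (build w wa wb hwa hrwa hwb hrwb)
  have hdisj : ∀ z, ReachWithin G Set.univ S u z → ReachWithin G Set.univ S w z → False :=
    fun z h1 h2 => hnr (reach_trans h1 (reach_symm h2))
  have hkey : ∀ z, z ∈ Pu.support → z ∈ Pw.support → z = a ∨ z = b := by
    intro z h1 h2
    rcases hPuQ z h1 with rfl | rfl | hr1
    · exact Or.inl rfl
    · exact Or.inr rfl
    rcases hPwQ z h2 with rfl | rfl | hr2
    · exact Or.inl rfl
    · exact Or.inr rfl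
    exact (hdisj z hr1 hr2).elim
  have hlen2 : ∀ p : G.Walk a b, 2 ≤ p.length := by
    intro p
    have h0 : p.length ≠ 0 := fun h => hab (Walk.eq_of_length_eq_zero h)
    have h1 : p.length ≠ 1 := fun h => hadj (adj_of_length_one p h)
    omega
  set c : G.Walk a a := Pu.append Pw.reverse with hcdef
  have hsupp_c : ∀ z ∈ c.support, z ∈ Pu.support ∨ z ∈ Pw.support := by
    intro z hz
    rcases (Walk.mem_support_append_iff _ _).mp hz with h | h
    · exact Or.inl h
    · right; rwa [Walk.support_reverse, List.mem_reverse] at h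
  have hedges_c : c.edges = Pu.edges ++ Pw.reverse.edges := Walk.edges_append _ _
  have hPu_edges_sub : ∀ e ∈ Pu.edges, e ∈ c.edges := by
    rw [hedges_c]; exact fun e he => List.mem_append_left _ he
  have hPw_edges_sub : ∀ e ∈ Pw.edges, e ∈ c.edges := by
    rw [hedges_c]
    intro e he
    refine List.mem_append_right _ ?_
    rwa [Walk.edges_reverse, List.mem_reverse]
  have hshared : ∀ x y : V, s(x, y) ∈ Pu.edges → s(x, y) ∈ Pw.edges → False := by
    intro x y hxu hxw
    have hx1 := Pu.fst_mem_support_of_mem_edges hxu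
    have hy1 := Pu.snd_mem_support_of_mem_edges hxu
    have hx2 := Pw.fst_mem_support_of_mem_edges hxw
    have hy2 := Pw.snd_mem_support_of_mem_edges hxw
    have hxy : G.Adj x y := Pu.edges_subset_edgeSet hxu
    rcases hkey x hx1 hx2 with rfl | rfl <;> rcases hkey y hy1 hy2 with rfl | rfl
    · exact hxy.ne rfl
    · exact hadj hxy
    · exact hadj hxy.symm
    · exact hxy.ne rfl
  have hc_len : c.length = Pu.length + Pw.length := by
    rw [hcdef, Walk.length_append, Walk.length_reverse]
  have hc4 : 4 ≤ c.length := by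
    have := hlen2 Pu; have := hlen2 Pw; omega
  have hanotu : a ∉ Pu.support.tail := by
    have := hPu_path.support_nodup
    rw [Pu.support_eq_cons] at this
    exact (List.nodup_cons.mp this).1
  have hbnotw : b ∉ Pw.reverse.support.tail := by
    have := hPw_path.reverse.support_nodup
    rw [Pw.reverse.support_eq_cons] at this
    exact (List.nodup_cons.mp this).1
  have hcyc : c.IsCycle := by
    refine ⟨⟨⟨?_⟩, ?_⟩, ?_⟩
    · rw [hedges_c]
      refine List.Nodup.append hPu_path.isTrail.edges_nodup
        hPw_path.reverse.isTrail.edges_nodup ?_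
      intro e he1 he2
      rw [Walk.edges_reverse, List.mem_reverse] at he2
      induction e using Sym2.ind with
      | _ x y => exact hshared x y he1 he2
    · intro hnil
      have := congrArg Walk.length hnil
      rw [Walk.length_nil] at this
      omega
    · have hts : c.support.tail = Pu.support.tail ++ Pw.reverse.support.tail := by
        rw [hcdef, Walk.support_append, Pu.support_eq_cons, List.cons_append, List.tail_cons]
        simp
      rw [hts]
      refine List.Nodup.append (hPu_path.support_nodup.sublist (List.tail_sublist _))
        (hPw_path.reverse.support_nodup.sublist (List.tail_sublist _)) ?_
      intro z hz1 hz2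
      have hz1' : z ∈ Pu.support := List.mem_of_mem_tail hz1
      have hz2' : z ∈ Pw.support := by
        have := List.mem_of_mem_tail hz2
        rwa [Walk.support_reverse, List.mem_reverse] at this
      rcases hkey z hz1' hz2' with rfl | rfl
      · exact hanotu hz1
      · exact hbnotw hz2
  obtain ⟨x, y, hxc, hyc, hxy, hne_e⟩ := hch c hcyc hc4
  have hcase_u : x ∈ Pu.support → y ∈ Pu.support → False := by
    intro h1 h2
    obtain ⟨q, hql, hqs⟩ := shortcut Pu h1 h2 hxy (fun he => hne_e (hPu_edges_sub _ he))
    have := hPu_min q (fun z hz => hPuQ z (hqs z hz))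
    omega
  have hcase_w : x ∈ Pw.support → y ∈ Pw.support → False := by
    intro h1 h2
    obtain ⟨q, hql, hqs⟩ := shortcut Pw h1 h2 hxy (fun he => hne_e (hPw_edges_sub _ he))
    have := hPw_min q (fun z hz => hPwQ z (hqs z hz))
    omega
  have hmix : ∀ z t : V, G.Adj z t → z ∈ Pu.support → z ∉ Pw.support →
      t ∈ Pw.support → t ∉ Pu.support → False := by
    intro z t hzt hz1 hz2 ht1 ht2
    have hz : ReachWithin G Set.univ S u z := by
      rcases hPuQ z hz1 with rfl | rfl | h
      · exact absurd Pw.start_mem_support hz2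
      · exact absurd Pw.end_mem_support hz2
      · exact h
    have ht : ReachWithin G Set.univ S w t := by
      rcases hPwQ t ht1 with rfl | rfl | h
      · exact absurd Pu.start_mem_support ht2
      · exact absurd Pu.end_mem_support ht2
      · exact h
    exact hdisj t (reach_adj hz hzt (reach_not_mem ht)) ht
  rcases hsupp_c x hxc with hxu | hxw <;> rcases hsupp_c y hyc with hyu | hyw
  · exact hcase_u hxu hyu
  · by_cases hyu' : y ∈ Pu.support
    · exact hcase_u hxu hyu'
    by_cases hxw' : x ∈ Pw.support
    · exact hcase_w hxw' hyw
    exact hmix x y hxy hxu hxw' hyw hyu'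
  · by_cases hyw' : y ∈ Pw.support
    · exact hcase_w hxw hyw'
    by_cases hxu' : x ∈ Pu.support
    · exact hcase_u hxu' hyu
    exact hmix y x hxy.symm hyu hyw' hxw hxu'
  · exact hcase_w hxw hyw

end Aux

theorem minSeparators_of_component_subset {V : Type*} [Fintype V]
    (G : SimpleGraph V) (hconn : G.Connected) (hch : IsChordal G)
    (S : Set V) (hS : IsInclMinSeparator G S)
    (Γ : Set V) (hΓ : IsCompOutside G S Γ)
    (hnc : ¬ CompleteOn G (Γ ∪ S)) :
    (∀ S' : Set V, IsMinSeparatorOn G (Γ ∪ S) S' → IsMinSeparator G S') ∧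
    ¬ IsMinSeparatorOn G (Γ ∪ S) S ∧
    {S' : Set V | IsMinSeparatorOn G (Γ ∪ S) S'} ⊂ {S' : Set V | IsMinSeparator G S'} := by
  classical
  obtain ⟨u₀, hu₀S, hΓeq⟩ := hΓ
  have hclq : G.IsClique S := isClique_of_minSeparator hch hS.1
  have part2 : ¬ IsMinSeparatorOn G (Γ ∪ S) S := by
    rintro ⟨-, u', w', ⟨hu', hw', huS', hwS', hne', hnr'⟩, -⟩
    have huΓ : u' ∈ Γ := hu'.resolve_right huS'
    have hwΓ : w' ∈ Γ := hw'.resolve_right hwS'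
    obtain ⟨p, hp⟩ := comp_walk hΓeq huΓ hwΓ
    exact hnr' ⟨p, fun x hx => ⟨Or.inl (hp x hx), comp_disj hΓeq (hp x hx)⟩⟩
  have part1 : ∀ S' : Set V, IsMinSeparatorOn G (Γ ∪ S) S' → IsMinSeparator G S' := by
    rintro S' ⟨hsub, u', w', ⟨hu', hw', h1, h2, h3, h4⟩, hmin'⟩
    refine ⟨Set.subset_univ _, u', w', ⟨trivial, trivial, h1, h2, h3, ?_⟩, ?_⟩
    · rintro ⟨p, hp⟩
      obtain ⟨d, ⟨hd1, -⟩, q, hq⟩ := reroute hclq hΓeq p hw' (fun x hx => (hp x hx).2)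
      have hd : d = u' := hd1 hu'
      subst hd
      exact h4 ⟨q, fun x hx => hq x hx⟩
    · intro S'' hss hsep
      obtain ⟨-, -, g1, g2, -, g4⟩ := hsep
      exact hmin' S'' hss
        ⟨hu', hw', g1, g2, h3, fun hr =>
          g4 (by obtain ⟨q, hq⟩ := hr; exact ⟨q, fun x hx => ⟨trivial, (hq x hx).2⟩⟩)⟩
  refine ⟨part1, part2, ?_⟩
  rw [Set.ssubset_def]
  exact ⟨fun S' hS' => part1 S' hS', fun h => part2 (h hS.1)⟩


end Chordal
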